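/- arXiv:2101.07185 — 4 statements merged into one kernel-verified Lean document; each statement's English description precedes it below -/
import Mathlib

section
/- Fix q ∈ (0,1) and θ₀ = arccos q, x_q = sin θ₀ − θ₀ cos θ₀. For every θ ∈ (0, π/2), the discriminant quantity Δ(q,θ) = ((qθ + x_q)/sin θ)² − 1 is nonnegative, and it vanishes only at θ = θ₀. -/
open Real Set

theorem discriminant_nonneg (q : ℝ) (hq : q ∈ Set.Ioo (0 : ℝ) 1)
    (θ₀ xq : ℝ) (hθ₀ : θ₀ = Real.arccos q)
    (hxq : xq = Real.sin θ₀ - θ₀ * Real.cos θ₀)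
    (Δ : ℝ → ℝ) (hΔ : ∀ θ, Δ θ = ((q * θ + xq) / Real.sin θ) ^ 2 - 1) :
    ∀ θ ∈ Set.Ioo 0 (Real.pi / 2), 0 ≤ Δ θ ∧ (Δ θ = 0 ↔ θ = θ₀) := by
  obtain ⟨hq0, hq1⟩ := hq
  have hcos : Real.cos θ₀ = q := by rw [hθ₀]; exact Real.cos_arccos (by linarith) (by linarith)
  have hθ₀pos : 0 < θ₀ := hθ₀ ▸ Real.arccos_pos.mpr hq1
  have hθ₀lt : θ₀ < π / 2 := hθ₀ ▸ Real.arccos_lt_pi_div_two.mpr hq0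
  set g : ℝ → ℝ := fun θ => q * θ + xq - Real.sin θ with hg
  have hderiv : ∀ t : ℝ, HasDerivAt g (q - Real.cos t) t := by
    intro t
    have h1 : HasDerivAt (fun θ : ℝ => q * θ + xq) (q * 1) t :=
      ((hasDerivAt_id t).const_mul q).add_const xq
    have h2 := h1.sub (Real.hasDerivAt_sin t)
    rw [mul_one] at h2
    exact h2
  have hcont : Continuous g := by
    exact ((continuous_const.mul continuous_id).add continuous_const).sub Real.continuous_sin
  have hgθ₀ : g θ₀ = 0 := by
    simp only [hg, hxq, hcos]; ring
  -- strict anti on [0, θ₀]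
  have hanti : StrictAntiOn g (Set.Icc 0 θ₀) := by
    apply strictAntiOn_of_deriv_neg (convex_Icc 0 θ₀) hcont.continuousOn
    intro t ht
    rw [interior_Icc] at ht
    rw [(hderiv t).deriv]
    have : q < Real.cos t := by
      rw [← hcos]
      exact Real.strictAntiOn_cos ⟨le_of_lt ht.1, by linarith [Real.pi_gt_three, ht.2]⟩
        ⟨le_of_lt hθ₀pos, by linarith [Real.pi_gt_three]⟩ ht.2
    linarith
  -- strict mono on [θ₀, π/2]
  have hmono : StrictMonoOn g (Set.Icc θ₀ (π / 2)) := by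
    apply strictMonoOn_of_deriv_pos (convex_Icc θ₀ (π / 2)) hcont.continuousOn
    intro t ht
    rw [interior_Icc] at ht
    rw [(hderiv t).deriv]
    have : Real.cos t < q := by
      rw [← hcos]
      exact Real.strictAntiOn_cos ⟨le_of_lt hθ₀pos, by linarith [Real.pi_gt_three]⟩
        ⟨by linarith [hθ₀pos, ht.1], by linarith [Real.pi_gt_three, ht.2]⟩ ht.1
    linarith
  intro θ hθ
  obtain ⟨hθ0, hθπ⟩ := hθ
  have hsin : 0 < Real.sin θ := Real.sin_pos_of_pos_of_lt_pi hθ0 (by linarith [Real.pi_gt_three])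
  -- g θ ≥ 0, with equality iff θ = θ₀
  have hkey : 0 ≤ g θ ∧ (g θ = 0 ↔ θ = θ₀) := by
    rcases lt_trichotomy θ θ₀ with h | h | h
    · have : g θ₀ < g θ := hanti ⟨le_of_lt hθ0, le_of_lt h⟩ ⟨le_of_lt hθ₀pos, le_refl _⟩ h
      rw [hgθ₀] at this
      exact ⟨le_of_lt this, by constructor <;> intro hh <;> [linarith; exact absurd hh (ne_of_lt h)]⟩
    · exact ⟨by rw [h, hgθ₀], by simp [h, hgθ₀]⟩
    · have : g θ₀ < g θ := hmono ⟨le_refl _, le_of_lt hθ₀lt⟩ ⟨le_of_lt h, le_of_lt hθπ⟩ h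
      rw [hgθ₀] at this
      exact ⟨le_of_lt this, by constructor <;> intro hh <;> [linarith; exact absurd hh (ne_of_gt h)]⟩
  have hge : Real.sin θ ≤ q * θ + xq := by have := hkey.1; simp only [hg] at this; linarith
  have hratio : 1 ≤ (q * θ + xq) / Real.sin θ := (le_div_iff₀ hsin).mpr (by linarith)
  constructor
  · rw [hΔ]
    nlinarith
  · rw [hΔ]
    rw [← hkey.2]
    constructor
    · intro h
      have h2 : ((q * θ + xq) / Real.sin θ) ^ 2 = 1 := by linarith
      have : (q * θ + xq) / Real.sin θ = 1 := by nlinarith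
      have : q * θ + xq = Real.sin θ := by field_simp at this; linarith
      simp only [hg]; linarith
    · intro h
      simp only [hg] at h
      have : q * θ + xq = Real.sin θ := by linarith
      rw [this, div_self (ne_of_gt hsin)]
      norm_num
end

section
/- For q ∈ (0,1), the function θ ↦ (qθ + x_q)/tan θ has negative derivative on (0, π/2), and the function θ ↦ (qθ + x_q)/sin θ is decreasing on (0, θ₀) and increasing on (θ₀, π/2), where θ₀ = arccos q and x_q = sin θ₀ − θ₀ cos θ₀. -/
open Real Set

theorem monotonicity_tan_sin (q : ℝ) (hq : q ∈ Set.Ioo (0 : ℝ) 1)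
    (θ₀ xq : ℝ) (hθ₀ : θ₀ = Real.arccos q)
    (hxq : xq = Real.sin θ₀ - θ₀ * Real.cos θ₀) :
    (∀ θ ∈ Set.Ioo 0 (Real.pi / 2),
        deriv (fun θ => (q * θ + xq) / Real.tan θ) θ < 0) ∧
    AntitoneOn (fun θ => (q * θ + xq) / Real.sin θ) (Set.Ioc 0 θ₀) ∧
    MonotoneOn (fun θ => (q * θ + xq) / Real.sin θ) (Set.Ico θ₀ (Real.pi / 2)) := by
  obtain ⟨hq0, hq1⟩ := hq
  have hθ₀pos : 0 < θ₀ := by rw [hθ₀]; exact Real.arccos_pos.2 hq1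
  have hθ₀lt : θ₀ < Real.pi / 2 := by rw [hθ₀]; exact Real.arccos_lt_pi_div_two.2 hq0
  have hcosθ₀ : Real.cos θ₀ = q := by
    rw [hθ₀]; exact Real.cos_arccos (by linarith) (by linarith)
  have hcosθ₀pos : 0 < Real.cos θ₀ := by rw [hcosθ₀]; exact hq0
  have hxqpos : 0 < xq := by
    have ht : θ₀ < Real.tan θ₀ := Real.lt_tan hθ₀pos hθ₀lt
    rw [Real.tan_eq_sin_div_cos, lt_div_iff₀ hcosθ₀pos] at ht
    rw [hxq]; linarith
  -- positivity facts on (0, π/2)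
  have hfacts : ∀ θ ∈ Set.Ioo 0 (Real.pi / 2),
      0 < Real.sin θ ∧ 0 < Real.cos θ ∧ 0 < q * θ + xq := by
    rintro θ ⟨h1, h2⟩
    refine ⟨Real.sin_pos_of_pos_of_lt_pi h1 (by linarith [Real.pi_pos]),
      Real.cos_pos_of_mem_Ioo ⟨by linarith, h2⟩, by nlinarith⟩
  -- derivative of the sin-quotient numerator-like function N
  set N : ℝ → ℝ := fun θ => q * Real.sin θ - (q * θ + xq) * Real.cos θ with hN
  have hNderiv : ∀ θ : ℝ, HasDerivAt N ((q * θ + xq) * Real.sin θ) θ := by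
    intro θ
    have h1 : HasDerivAt (fun θ : ℝ => q * θ + xq) q θ := by
      simpa using ((hasDerivAt_id θ).const_mul q).add_const xq
    have h2 := (Real.hasDerivAt_sin θ).const_mul q
    have h3 := h1.mul (Real.hasDerivAt_cos θ)
    have : HasDerivAt N (q * Real.cos θ - (q * Real.cos θ + (q * θ + xq) * -Real.sin θ)) θ := h2.sub h3
    convert this using 1
    ring
  have hNθ₀ : N θ₀ = 0 := by
    simp only [hN, hxq, hcosθ₀]; ring
  have hNmono : StrictMonoOn N (Set.Icc 0 (Real.pi / 2)) := by
    apply strictMonoOn_of_deriv_pos (convex_Icc _ _)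
    · exact ((continuous_const.mul Real.continuous_sin).sub
        (((continuous_const.mul continuous_id).add continuous_const).mul
          Real.continuous_cos)).continuousOn
    · intro θ hθ
      rw [interior_Icc] at hθ
      obtain ⟨hs, _, hp⟩ := hfacts θ hθ
      rw [(hNderiv θ).deriv]
      positivity
  have hNneg : ∀ θ ∈ Set.Ioo 0 θ₀, N θ < 0 := by
    rintro θ ⟨h1, h2⟩
    have := hNmono ⟨le_of_lt h1, by linarith⟩ ⟨le_of_lt hθ₀pos, le_of_lt hθ₀lt⟩ h2
    linarith [hNθ₀]
  have hNpos : ∀ θ ∈ Set.Ioo θ₀ (Real.pi / 2), 0 < N θ := by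
    rintro θ ⟨h1, h2⟩
    have := hNmono ⟨le_of_lt hθ₀pos, le_of_lt hθ₀lt⟩ ⟨by linarith, le_of_lt h2⟩ h1
    linarith [hNθ₀]
  -- derivative of the sin-quotient function
  have hgderiv : ∀ θ ∈ Set.Ioo 0 (Real.pi / 2),
      HasDerivAt (fun θ => (q * θ + xq) / Real.sin θ) (N θ / Real.sin θ ^ 2) θ := by
    intro θ hθ
    obtain ⟨hs, _, _⟩ := hfacts θ hθ
    have h1 : HasDerivAt (fun θ : ℝ => q * θ + xq) q θ := by
      simpa using ((hasDerivAt_id θ).const_mul q).add_const xq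
    have := h1.div (Real.hasDerivAt_sin θ) (ne_of_gt hs)
    exact this
  refine ⟨?_, ?_, ?_⟩
  · -- tan part
    rintro θ hθ
    obtain ⟨hs, hc, hp⟩ := hfacts θ hθ
    obtain ⟨h1, h2⟩ := hθ
    have htanpos : 0 < Real.tan θ := Real.tan_pos_of_pos_of_lt_pi_div_two h1 h2
    have hd : HasDerivAt (fun θ => (q * θ + xq) / Real.tan θ)
        ((q * Real.tan θ - (q * θ + xq) * (1 / Real.cos θ ^ 2)) / Real.tan θ ^ 2) θ := by
      have ha : HasDerivAt (fun θ : ℝ => q * θ + xq) q θ := by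
        simpa using ((hasDerivAt_id θ).const_mul q).add_const xq
      exact ha.div (Real.hasDerivAt_tan (ne_of_gt hc)) (ne_of_gt htanpos)
    rw [hd.deriv]
    apply div_neg_of_neg_of_pos _ (by positivity)
    have hsinlt : Real.sin θ < θ := Real.sin_lt h1
    have hcle : Real.cos θ ≤ 1 := Real.cos_le_one θ
    have key : q * Real.sin θ * Real.cos θ < q * θ + xq := by
      have ha : q * Real.sin θ * Real.cos θ ≤ q * Real.sin θ :=
        mul_le_of_le_one_right (le_of_lt (mul_pos hq0 hs)) hcle
      have hb : q * Real.sin θ < q * θ := by exact (mul_lt_mul_iff_right₀ hq0).2 hsinlt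
      linarith
    rw [Real.tan_eq_sin_div_cos]
    have heq : q * (Real.sin θ / Real.cos θ) - (q * θ + xq) * (1 / Real.cos θ ^ 2)
        = (q * Real.sin θ * Real.cos θ - (q * θ + xq)) / Real.cos θ ^ 2 := by
      field_simp
    rw [heq]
    exact div_neg_of_neg_of_pos (by linarith) (by positivity)
  · -- antitone on Ioc 0 θ₀
    have hsub : Set.Ioo 0 θ₀ ⊆ Set.Ioo 0 (Real.pi / 2) := fun x ⟨a, b⟩ => ⟨a, by linarith⟩
    apply antitoneOn_of_deriv_nonpos (convex_Ioc _ _)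
    · apply ContinuousOn.div (by fun_prop) (by fun_prop)
      rintro θ ⟨h1, h2⟩
      exact ne_of_gt (Real.sin_pos_of_pos_of_lt_pi h1 (by linarith [Real.pi_pos]))
    · rw [interior_Ioc]
      intro θ hθ
      exact ((hgderiv θ (hsub hθ)).differentiableAt).differentiableWithinAt
    · rw [interior_Ioc]
      intro θ hθ
      rw [(hgderiv θ (hsub hθ)).deriv]
      have hs := (hfacts θ (hsub hθ)).1
      exact le_of_lt (div_neg_of_neg_of_pos (hNneg θ hθ) (by positivity))
  · -- monotone on Ico θ₀ (π/2)
    have hsub : Set.Ioo θ₀ (Real.pi / 2) ⊆ Set.Ioo 0 (Real.pi / 2) :=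
      fun x ⟨a, b⟩ => ⟨by linarith, b⟩
    apply monotoneOn_of_deriv_nonneg (convex_Ico _ _)
    · apply ContinuousOn.div (by fun_prop) (by fun_prop)
      rintro θ ⟨h1, h2⟩
      exact ne_of_gt (Real.sin_pos_of_pos_of_lt_pi (by linarith) (by linarith [Real.pi_pos]))
    · rw [interior_Ico]
      intro θ hθ
      exact ((hgderiv θ (hsub hθ)).differentiableAt).differentiableWithinAt
    · rw [interior_Ico]
      intro θ hθ
      rw [(hgderiv θ (hsub hθ)).deriv]
      have hs := (hfacts θ (hsub hθ)).1
      exact le_of_lt (div_pos (hNpos θ hθ) (by positivity))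
end

section
/- Let z₋⁰ = −i(q − √(q²−1)) for q ≥ 1, and h_q(z) = −iz + q·log(1−z²). Then Re h_q(z₋⁰) = q·ln(2q/e) + √(q²−1) − q·ln(q + √(q²−1)), and in particular Re h_q(z₋⁰) ≤ q·ln(2q/e) for all q ≥ 1. -/
open Complex Real

lemma log_pade_aux (u : ℝ) (hu : 1 ≤ u) : u ^ 2 - 1 ≤ (u ^ 2 + 1) * Real.log u := by
  set f : ℝ → ℝ := fun x => (x ^ 2 + 1) * Real.log x - (x ^ 2 - 1) with hf
  have hderiv : ∀ x : ℝ, 0 < x →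
      HasDerivAt f (2 * x * Real.log x + (x ^ 2 + 1) / x - 2 * x) x := by
    intro x hx
    have h1 : HasDerivAt (fun y : ℝ => (y ^ 2 + 1) * Real.log y)
        ((2 * x) * Real.log x + (x ^ 2 + 1) * x⁻¹) x := by
      have ha : HasDerivAt (fun y : ℝ => y ^ 2 + 1) (2 * x) x := by
        simpa using ((hasDerivAt_pow 2 x).add_const 1)
      exact ha.mul (Real.hasDerivAt_log hx.ne')
    have h2 : HasDerivAt (fun y : ℝ => y ^ 2 - 1) (2 * x) x := by
      simpa using ((hasDerivAt_pow 2 x).sub_const 1)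
    have h3 := h1.sub h2
    rw [← div_eq_mul_inv] at h3
    exact h3
  have hmono : MonotoneOn f (Set.Ici (1 : ℝ)) := by
    apply monotoneOn_of_deriv_nonneg (convex_Ici 1)
    · apply ContinuousOn.sub
      · apply ContinuousOn.mul (by fun_prop)
        apply Real.continuousOn_log.mono
        intro x hx
        simp only [Set.mem_Ici] at hx
        simp only [Set.mem_compl_iff, Set.mem_singleton_iff]
        linarith
      · fun_prop
    · intro x hx
      simp only [interior_Ici, Set.mem_Ioi] at hx
      exact ((hderiv x (by linarith)).differentiableAt).differentiableWithinAt
    · intro x hx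
      simp only [interior_Ici, Set.mem_Ioi] at hx
      have hx0 : (0 : ℝ) < x := by linarith
      rw [(hderiv x hx0).deriv]
      have hlog : 1 - 1 / x ≤ Real.log x := by
        have := Real.log_le_sub_one_of_pos (x := 1 / x) (by positivity)
        rw [Real.log_div one_ne_zero hx0.ne', Real.log_one] at this
        linarith
      have h2 : 2 * x * (1 - 1 / x) ≤ 2 * x * Real.log x :=
        mul_le_mul_of_nonneg_left hlog (by linarith)
      have h3 : 2 * x * (1 - 1 / x) + (x ^ 2 + 1) / x - 2 * x = (x - 1) ^ 2 / x := by
        field_simp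
        ring
      have h4 : (0:ℝ) ≤ (x - 1) ^ 2 / x := div_nonneg (sq_nonneg _) hx0.le
      linarith
  have hf1 : f 1 = 0 := by simp [hf]
  have := hmono (Set.mem_Ici.2 le_rfl) (Set.mem_Ici.2 hu) hu
  rw [hf1] at this
  simp only [hf] at this
  linarith

theorem re_hq_at_saddle (q : ℝ) (hq : 1 ≤ q)
    (zm : ℂ) (hz : zm = -Complex.I * ((q : ℂ) - (Real.sqrt (q ^ 2 - 1) : ℂ)))
    (h : ℂ → ℂ)
    (hh : ∀ z : ℂ, h z = -Complex.I * z + (q : ℂ) * Complex.log (1 - z ^ 2)) :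
    (h zm).re = q * Real.log (2 * q / Real.exp 1) +
        Real.sqrt (q ^ 2 - 1) - q * Real.log (q + Real.sqrt (q ^ 2 - 1)) ∧
    (h zm).re ≤ q * Real.log (2 * q / Real.exp 1) := by
  set s := Real.sqrt (q ^ 2 - 1) with hs
  have hq0 : (0:ℝ) < q := by linarith
  have hq21 : (0:ℝ) ≤ q ^ 2 - 1 := by nlinarith
  have hs0 : 0 ≤ s := Real.sqrt_nonneg _
  have hs2 : s ^ 2 = q ^ 2 - 1 := Real.sq_sqrt hq21
  have hsltq : s < q := by
    nlinarith [hs2]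
  have hqs : (0:ℝ) < q - s := by linarith
  have hqps : (0:ℝ) < q + s := by linarith
  have hprod : (q - s) * (q + s) = 1 := by nlinarith [hs2]
  -- compute 1 - zm^2
  have hA : (0:ℝ) < 2 * q * (q - s) := by positivity
  have hzm2 : (1 : ℂ) - zm ^ 2 = ((2 * q * (q - s) : ℝ) : ℂ) := by
    rw [hz]
    have : ((q : ℂ) - (s : ℂ)) = ((q - s : ℝ) : ℂ) := by push_cast; ring
    rw [this]
    have h1 : (1 : ℂ) - (-Complex.I * ((q - s : ℝ) : ℂ)) ^ 2
        = ((1 + (q - s) ^ 2 : ℝ) : ℂ) := by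
      push_cast
      rw [mul_pow, neg_sq, Complex.I_sq]
      ring
    rw [h1]
    norm_cast
    nlinarith [hs2]
  have hre : (h zm).re = -(q - s) + q * Real.log (2 * q * (q - s)) := by
    rw [hh zm, hzm2, ← Complex.ofReal_log hA.le]
    rw [hz]
    have : (-Complex.I * (-Complex.I * ((q : ℂ) - (s : ℂ)))) =
        ((-(q - s) : ℝ) : ℂ) := by
      push_cast
      rw [← mul_assoc, neg_mul_neg, Complex.I_mul_I]
      ring
    rw [this]
    push_cast
    simp
  -- log identities
  have hlogA : Real.log (2 * q * (q - s)) = Real.log (2 * q) - Real.log (q + s) := by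
    rw [Real.log_mul (by positivity) hqs.ne']
    have hinv : q - s = (q + s)⁻¹ := by
      field_simp
      linarith [hprod]
    rw [hinv, Real.log_inv]
    ring
  have hlogE : Real.log (2 * q / Real.exp 1) = Real.log (2 * q) - 1 := by
    rw [Real.log_div (by positivity) (Real.exp_ne_zero 1), Real.log_exp]
  -- the inequality s ≤ q * log (q + s)
  have hkey : s ≤ q * Real.log (q + s) := by
    have hpade := log_pade_aux (q + s) (by linarith)
    have h1 : (q + s) ^ 2 + 1 = 2 * q * (q + s) := by nlinarith [hs2]
    have h2 : (q + s) ^ 2 - 1 = 2 * s * (q + s) := by nlinarith [hs2]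
    rw [h1, h2] at hpade
    have hmm : s * (q + s) ≤ (q * Real.log (q + s)) * (q + s) := by nlinarith
    exact (mul_le_mul_iff_of_pos_right hqps).mp hmm
  constructor
  · rw [hre, hlogA, hlogE]; ring
  · rw [hre, hlogA, hlogE]
    nlinarith [hkey]
end

section
/- Let ψ : (0,∞) → ℂ be measurable and suppose there exist constants C, D > 0 and an integer k with |k| ≥ 2 and γ = √(k² − ν²) ≥ 1 (for some ν ∈ [−1,1]) such that |ψ(r)| ≤ C·(min(r/2, 1))^{γ−1}·e^{−D|k|} for 0 < r ≤ max(|k|/2, 2), |ψ(r)| ≤ C·|k|^{−3/4}·(||k|−r| + |k|^{1/3})^{−1/4} for |k|/2 ≤ r ≤ 2|k|, and |ψ(r)| ≤ C·r^{−1} for r ≥ 2|k|. Then there is a constant C′ depending only on C, D (not on k, ν, R) such that for every R ≥ 1, (∫_R^{2R} |ψ(r)|² r² dr)^{1/2} ≤ C′·R^{1/2}. -/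
open Real MeasureTheory Set
open intervalIntegral

private lemma aux_rpow_nonneg (x p : ℝ) (hcos : 0 ≤ Real.cos (p * π)) : 0 ≤ x ^ p := by
  rcases le_or_gt 0 x with h | h
  · exact Real.rpow_nonneg h p
  · rw [Real.rpow_def_of_neg h]
    exact mul_nonneg (Real.exp_pos _).le hcos

private lemma aux_nonneg_neg_half (x : ℝ) : 0 ≤ x ^ (-(1 : ℝ) / 2) := by
  refine aux_rpow_nonneg x _ ?_
  rw [show (-(1 : ℝ) / 2) * π = -(π / 2) by ring, Real.cos_neg, Real.cos_pi_div_two]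

private lemma aux_sqrt_diff {x y R : ℝ} (hxy : x ≤ y + R) (hR : 0 ≤ R) :
    Real.sqrt x - Real.sqrt y ≤ Real.sqrt R := by
  rcases le_or_gt y 0 with hy | hy
  · have h1 : Real.sqrt x ≤ Real.sqrt R := Real.sqrt_le_sqrt (by linarith)
    have h2 : 0 ≤ Real.sqrt y := Real.sqrt_nonneg y
    linarith
  · have h1 : Real.sqrt (y + R) ≤ Real.sqrt y + Real.sqrt R := by
      nlinarith [Real.sq_sqrt hy.le, Real.sq_sqrt hR, Real.sq_sqrt (show (0:ℝ) ≤ y + R by linarith),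
        Real.sqrt_nonneg y, Real.sqrt_nonneg R, Real.sqrt_nonneg (y + R),
        mul_nonneg (Real.sqrt_nonneg y) (Real.sqrt_nonneg R)]
    have h2 : Real.sqrt x ≤ Real.sqrt (y + R) := Real.sqrt_le_sqrt hxy
    linarith

private lemma aux_int_neg_half (x y : ℝ) :
    ∫ t in x..y, t ^ (-(1 : ℝ) / 2) = 2 * Real.sqrt y - 2 * Real.sqrt x := by
  rw [integral_rpow (Or.inl (by norm_num))]
  rw [show (-(1 : ℝ) / 2 + 1) = 1 / 2 by norm_num, ← Real.sqrt_eq_rpow, ← Real.sqrt_eq_rpow]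
  ring

private lemma aux_int_g1 {c R : ℝ} (hR : 0 ≤ R) :
    ∫ r in R..(2 * R), (c - r) ^ (-(1 : ℝ) / 2) ≤ 2 * Real.sqrt R := by
  rw [integral_comp_sub_left (fun t => t ^ (-(1 : ℝ) / 2)) c, aux_int_neg_half]
  have := aux_sqrt_diff (x := c - R) (y := c - 2 * R) (R := R) (by linarith) hR
  linarith

private lemma aux_int_g2 {c R : ℝ} (hR : 0 ≤ R) :
    ∫ r in R..(2 * R), (r - c) ^ (-(1 : ℝ) / 2) ≤ 2 * Real.sqrt R := by
  rw [integral_comp_sub_right (fun t => t ^ (-(1 : ℝ) / 2)) c, aux_int_neg_half]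
  have := aux_sqrt_diff (x := 2 * R - c) (y := R - c) (R := R) (by linarith) hR
  linarith

private lemma aux_Ig1 {c R : ℝ} :
    IntervalIntegrable (fun r => (c - r) ^ (-(1 : ℝ) / 2)) volume R (2 * R) := by
  simpa using (intervalIntegrable_rpow' (a := c - R) (b := c - 2 * R)
    (by norm_num : (-1:ℝ) < -(1:ℝ)/2)).comp_sub_left c

private lemma aux_Ig2 {c R : ℝ} :
    IntervalIntegrable (fun r => (r - c) ^ (-(1 : ℝ) / 2)) volume R (2 * R) := by
  simpa using (intervalIntegrable_rpow' (a := R - c) (b := 2 * R - c)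
    (by norm_num : (-1:ℝ) < -(1:ℝ)/2)).comp_sub_right c
set_option maxHeartbeats 1000000 in
theorem dyadic_L2_bound_large_R (C D : ℝ) (hC : 0 < C) (hD : 0 < D) :
    ∃ C' : ℝ, 0 < C' ∧
      ∀ (ν : ℝ), ν ∈ Set.Icc (-1 : ℝ) 1 →
      ∀ (k : ℤ), 2 ≤ |k| →
      ∀ (γ : ℝ), γ = Real.sqrt ((k : ℝ) ^ 2 - ν ^ 2) → 1 ≤ γ →
      ∀ (ψ : ℝ → ℂ), Measurable ψ →
        (∀ r : ℝ, 0 < r → r ≤ max ((|k| : ℝ) / 2) 2 →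
          ‖ψ r‖ ≤ C * (min (r / 2) 1) ^ (γ - 1) * Real.exp (-D * |k|)) →
        (∀ r : ℝ, (|k| : ℝ) / 2 ≤ r → r ≤ 2 * |k| →
          ‖ψ r‖ ≤
            C * (|k| : ℝ) ^ (-(3 : ℝ) / 4) *
              (|(|k| : ℝ) - r| + (|k| : ℝ) ^ ((1 : ℝ) / 3)) ^ (-(1 : ℝ) / 4)) →
        (∀ r : ℝ, 2 * (|k| : ℝ) ≤ r → ‖ψ r‖ ≤ C * r⁻¹) →
        ∀ R : ℝ, 1 ≤ R →
          (∫ r in Set.Ioc R (2 * R), ‖ψ r‖ ^ 2 * r ^ 2) ^ ((1 : ℝ) / 2) ≤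
            C' * R ^ ((1 : ℝ) / 2) := by
  set K : ℝ := C ^ 2 / D ^ 2 + C ^ 2 + 32 * C ^ 2 with hKdef
  have hK0 : 0 < K := by positivity
  refine ⟨K ^ ((1 : ℝ) / 2), Real.rpow_pos_of_pos hK0 _, ?_⟩
  intro ν hν k hk γ hγdef hγ1 ψ hψ h1 h2 h3 R hR
  simp only [Int.cast_abs] at h1 h2 h3
  set m : ℝ := |(k : ℝ)| with hmdef
  have hm2 : (2 : ℝ) ≤ m := by rw [hmdef, ← Int.cast_abs]; exact_mod_cast hk
  have hm0 : (0 : ℝ) < m := by linarith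
  set a : ℝ := m ^ ((1 : ℝ) / 3) with hadef
  have ha1 : (1 : ℝ) ≤ a := by
    rw [hadef]
    calc (1 : ℝ) = 1 ^ ((1 : ℝ) / 3) := (Real.one_rpow _).symm
    _ ≤ m ^ ((1 : ℝ) / 3) := Real.rpow_le_rpow (by norm_num) (by linarith) (by norm_num)
  set F : ℝ → ℝ := fun r => ‖ψ r‖ ^ 2 * r ^ 2 with hFdef
  have hF0 : ∀ r : ℝ, 0 ≤ F r := by
    intro r; simp only [hFdef]; positivity
  have hmax : max (m / 2) 2 ≤ m := max_le (by linarith) (by linarith)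
  have hRnn : (0 : ℝ) ≤ R := by linarith
  have hRle : R ≤ 2 * R := by linarith
  -- region 1 bound
  have hreg1 : ∀ r : ℝ, 0 < r → r ≤ max (m / 2) 2 → F r ≤ C ^ 2 / D ^ 2 := by
    intro r hr0 hrle
    have hb := h1 r hr0 hrle
    have hmin0 : (0 : ℝ) ≤ min (r / 2) 1 := le_min (by linarith) (by norm_num)
    have hmin1 : (min (r / 2) 1) ^ (γ - 1) ≤ 1 :=
      Real.rpow_le_one hmin0 (min_le_right _ _) (by linarith)
    have hminn : 0 ≤ (min (r / 2) 1) ^ (γ - 1) := Real.rpow_nonneg hmin0 _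
    have hb2 : ‖ψ r‖ ≤ C * Real.exp (-D * m) := by
      have step : C * (min (r / 2) 1) ^ (γ - 1) * Real.exp (-D * m) ≤
          C * 1 * Real.exp (-D * m) := by
        apply mul_le_mul_of_nonneg_right _ (Real.exp_pos _).le
        exact mul_le_mul_of_nonneg_left hmin1 hC.le
      calc ‖ψ r‖ ≤ _ := hb
        _ ≤ C * 1 * Real.exp (-D * m) := step
        _ = C * Real.exp (-D * m) := by ring
    have hE : D * m + 1 ≤ Real.exp (D * m) := Real.add_one_le_exp _
    have hEinv : Real.exp (-D * m) = (Real.exp (D * m))⁻¹ := by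
      rw [show -D * m = -(D * m) by ring, Real.exp_neg]
    have hinv : (Real.exp (D * m))⁻¹ ≤ (D * m)⁻¹ :=
      inv_anti₀ (by positivity) (by linarith)
    have hb3 : ‖ψ r‖ ≤ C * (D * m)⁻¹ := by
      rw [hEinv] at hb2
      have := mul_le_mul_of_nonneg_left hinv hC.le
      linarith
    have hrm : r ≤ m := le_trans hrle hmax
    have h4 : ‖ψ r‖ ^ 2 ≤ (C * (D * m)⁻¹) ^ 2 :=
      pow_le_pow_left₀ (norm_nonneg _) hb3 2
    have h5 : r ^ 2 ≤ m ^ 2 := pow_le_pow_left₀ hr0.le hrm 2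
    have h6 : ‖ψ r‖ ^ 2 * r ^ 2 ≤ (C * (D * m)⁻¹) ^ 2 * m ^ 2 :=
      mul_le_mul h4 h5 (by positivity) (by positivity)
    have h7 : (C * (D * m)⁻¹) ^ 2 * m ^ 2 = C ^ 2 / D ^ 2 := by
      field_simp
    simp only [hFdef]
    linarith [h6, h7.le]
  -- region 3 bound
  have hreg3 : ∀ r : ℝ, 2 * m ≤ r → F r ≤ C ^ 2 := by
    intro r hr
    have hr0 : (0 : ℝ) < r := by linarith
    have hb := h3 r hr
    have h4 : ‖ψ r‖ ^ 2 ≤ (C * r⁻¹) ^ 2 :=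
      pow_le_pow_left₀ (norm_nonneg _) hb 2
    have h6 : ‖ψ r‖ ^ 2 * r ^ 2 ≤ (C * r⁻¹) ^ 2 * r ^ 2 :=
      mul_le_mul_of_nonneg_right h4 (by positivity)
    have h7 : (C * r⁻¹) ^ 2 * r ^ 2 = C ^ 2 := by
      field_simp
    simp only [hFdef]
    linarith [h6, h7.le]
  -- region 2 bound
  have hreg2 : ∀ r : ℝ, m / 2 ≤ r → r ≤ 2 * m →
      F r ≤ 4 * C ^ 2 * m ^ ((1 : ℝ) / 2) * (|m - r| + a) ^ (-(1 : ℝ) / 2) := by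
    intro r hr1 hr2
    have hr0 : (0 : ℝ) < r := by linarith
    have hb := h2 r hr1 hr2
    have ht1 : (1 : ℝ) ≤ |m - r| + a := by
      have := abs_nonneg (m - r); linarith
    have ht0 : (0 : ℝ) < |m - r| + a := by linarith
    have e1 : (m ^ (-(3 : ℝ) / 4)) ^ 2 = m ^ (-(3 : ℝ) / 2) := by
      rw [← Real.rpow_natCast (m ^ (-(3 : ℝ) / 4)) 2, ← Real.rpow_mul hm0.le]
      norm_num
    have e2 : ((|m - r| + a) ^ (-(1 : ℝ) / 4)) ^ 2 = (|m - r| + a) ^ (-(1 : ℝ) / 2) := by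
      rw [← Real.rpow_natCast ((|m - r| + a) ^ (-(1 : ℝ) / 4)) 2, ← Real.rpow_mul ht0.le]
      norm_num
    have h4 : ‖ψ r‖ ^ 2 ≤
        (C * m ^ (-(3 : ℝ) / 4) * (|m - r| + a) ^ (-(1 : ℝ) / 4)) ^ 2 :=
      pow_le_pow_left₀ (norm_nonneg _) hb 2
    have h5 : r ^ 2 ≤ (2 * m) ^ 2 := pow_le_pow_left₀ hr0.le hr2 2
    have h6 : ‖ψ r‖ ^ 2 * r ^ 2 ≤
        (C * m ^ (-(3 : ℝ) / 4) * (|m - r| + a) ^ (-(1 : ℝ) / 4)) ^ 2 * (2 * m) ^ 2 :=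
      mul_le_mul h4 h5 (by positivity) (by positivity)
    have e3 : m ^ (-(3 : ℝ) / 2) * m ^ (2 : ℕ) = m ^ ((1 : ℝ) / 2) := by
      rw [← Real.rpow_natCast m 2, ← Real.rpow_add hm0]
      norm_num
    have h7 : (C * m ^ (-(3 : ℝ) / 4) * (|m - r| + a) ^ (-(1 : ℝ) / 4)) ^ 2 * (2 * m) ^ 2 =
        4 * C ^ 2 * m ^ ((1 : ℝ) / 2) * (|m - r| + a) ^ (-(1 : ℝ) / 2) := by
      rw [mul_pow, mul_pow, e1, e2]
      calc C ^ 2 * m ^ (-(3 : ℝ) / 2) * (|m - r| + a) ^ (-(1 : ℝ) / 2) * (2 * m) ^ 2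
          = 4 * C ^ 2 * (m ^ (-(3 : ℝ) / 2) * m ^ (2 : ℕ)) * (|m - r| + a) ^ (-(1 : ℝ) / 2) := by
            ring
        _ = 4 * C ^ 2 * m ^ ((1 : ℝ) / 2) * (|m - r| + a) ^ (-(1 : ℝ) / 2) := by rw [e3]
    simp only [hFdef]
    linarith [h6, h7.le]
  have hFmeas : Measurable F :=
    ((continuous_norm.measurable.comp hψ).pow_const 2).mul (measurable_id.pow_const 2)
  have hvol : (volume (Set.Ioc R (2 * R))).toReal = R := by
    rw [Real.volume_Ioc, ENNReal.toReal_ofReal (by linarith)]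
    ring
  have hconst_int : ∀ c : ℝ, IntegrableOn (fun _ : ℝ => c) (Set.Ioc R (2 * R)) volume :=
    fun c => integrableOn_const measure_Ioc_lt_top.ne enorm_ne_top
  have key : (∫ r in Set.Ioc R (2 * R), F r) ≤ K * R := by
    rcases le_or_gt m (4 * R) with hcase | hcase
    · -- combined bound
      set B : ℝ := 4 * C ^ 2 * m ^ ((1 : ℝ) / 2) with hBdef
      have hB0 : 0 ≤ B := by rw [hBdef]; positivity
      have hfnn : ∀ r : ℝ, 0 ≤ (|m - r| + a) ^ (-(1 : ℝ) / 2) := fun r =>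
        Real.rpow_nonneg (by have := abs_nonneg (m - r); linarith) _
      have hpt : ∀ r ∈ Set.Ioc R (2 * R),
          F r ≤ (C ^ 2 / D ^ 2 + C ^ 2) + B * (|m - r| + a) ^ (-(1 : ℝ) / 2) := by
        intro r hrS
        have hr0 : (0 : ℝ) < r := by have := hrS.1; linarith
        have hBf : 0 ≤ B * (|m - r| + a) ^ (-(1 : ℝ) / 2) := mul_nonneg hB0 (hfnn r)
        rcases le_or_gt r (max (m / 2) 2) with hc1 | hc1
        · have := hreg1 r hr0 hc1
          have hCnn : (0 : ℝ) ≤ C ^ 2 := by positivity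
          linarith
        · rcases le_or_gt r (2 * m) with hc2 | hc2
          · have := hreg2 r (le_trans (le_max_left _ _) hc1.le) hc2
            have hA : (0 : ℝ) ≤ C ^ 2 / D ^ 2 + C ^ 2 := by positivity
            linarith
          · have := hreg3 r hc2.le
            have hA : (0 : ℝ) ≤ C ^ 2 / D ^ 2 := by positivity
            linarith
      have hfcont : Continuous fun r : ℝ => (|m - r| + a) ^ (-(1 : ℝ) / 2) := by
        have hbase : Continuous fun r : ℝ => |m - r| + a :=
          ((continuous_const.sub continuous_id).abs).add continuous_const
        exact hbase.rpow_const fun r =>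
          Or.inl (ne_of_gt (by have := abs_nonneg (m - r); linarith))
      have hIf : IntegrableOn (fun r : ℝ => (|m - r| + a) ^ (-(1 : ℝ) / 2))
          (Set.Ioc R (2 * R)) volume :=
        (hfcont.intervalIntegrable R (2 * R)).1
      have hIbound : IntegrableOn
          (fun r => (C ^ 2 / D ^ 2 + C ^ 2) + B * (|m - r| + a) ^ (-(1 : ℝ) / 2))
          (Set.Ioc R (2 * R)) volume :=
        (hconst_int _).add (hIf.const_mul B)
      have hIF : IntegrableOn F (Set.Ioc R (2 * R)) volume := by
        refine Integrable.mono' hIbound hFmeas.aestronglyMeasurable ?_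
        refine (ae_restrict_iff' measurableSet_Ioc).2 (ae_of_all _ fun r hr => ?_)
        rw [Real.norm_of_nonneg (hF0 r)]
        exact hpt r hr
      have hstep : (∫ r in Set.Ioc R (2 * R), F r) ≤
          ∫ r in Set.Ioc R (2 * R),
            ((C ^ 2 / D ^ 2 + C ^ 2) + B * (|m - r| + a) ^ (-(1 : ℝ) / 2)) :=
        setIntegral_mono_on hIF hIbound measurableSet_Ioc hpt
      have hsplit : (∫ r in Set.Ioc R (2 * R),
            ((C ^ 2 / D ^ 2 + C ^ 2) + B * (|m - r| + a) ^ (-(1 : ℝ) / 2))) =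
          (C ^ 2 / D ^ 2 + C ^ 2) * R +
            B * ∫ r in Set.Ioc R (2 * R), (|m - r| + a) ^ (-(1 : ℝ) / 2) := by
        rw [integral_add (hconst_int _) (hIf.const_mul B), setIntegral_const,
          MeasureTheory.integral_const_mul, measureReal_def, hvol, smul_eq_mul]
        ring
      have hfg : ∀ r : ℝ, (|m - r| + a) ^ (-(1 : ℝ) / 2) ≤
          (m + a - r) ^ (-(1 : ℝ) / 2) + (r - (m - a)) ^ (-(1 : ℝ) / 2) := by
        intro r
        rcases le_total r m with h | h
        · have e : |m - r| + a = m + a - r := by rw [abs_of_nonneg (by linarith)]; ring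
          rw [e]
          linarith [aux_nonneg_neg_half (r - (m - a))]
        · have e : |m - r| + a = r - (m - a) := by rw [abs_of_nonpos (by linarith)]; ring
          rw [e]
          linarith [aux_nonneg_neg_half (m + a - r)]
      have hI2 : (∫ r in Set.Ioc R (2 * R), (|m - r| + a) ^ (-(1 : ℝ) / 2)) ≤
          4 * Real.sqrt R := by
        rw [← intervalIntegral.integral_of_le hRle]
        have hIg1 : IntervalIntegrable (fun r => (m + a - r) ^ (-(1 : ℝ) / 2)) volume R (2 * R) :=
          aux_Ig1
        have hIg2 : IntervalIntegrable (fun r => (r - (m - a)) ^ (-(1 : ℝ) / 2)) volume R (2 * R) :=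
          aux_Ig2
        have hmono : (∫ r in R..(2 * R), (|m - r| + a) ^ (-(1 : ℝ) / 2)) ≤
            ∫ r in R..(2 * R),
              ((m + a - r) ^ (-(1 : ℝ) / 2) + (r - (m - a)) ^ (-(1 : ℝ) / 2)) := by
          apply intervalIntegral.integral_mono_on hRle (hfcont.intervalIntegrable _ _)
            (hIg1.add hIg2)
          intro x _
          exact hfg x
        have hadd : (∫ r in R..(2 * R),
            ((m + a - r) ^ (-(1 : ℝ) / 2) + (r - (m - a)) ^ (-(1 : ℝ) / 2))) =
            (∫ r in R..(2 * R), (m + a - r) ^ (-(1 : ℝ) / 2)) +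
            ∫ r in R..(2 * R), (r - (m - a)) ^ (-(1 : ℝ) / 2) :=
          intervalIntegral.integral_add hIg1 hIg2
        have hb1 := aux_int_g1 (c := m + a) hRnn
        have hb2 := aux_int_g2 (c := m - a) hRnn
        linarith
      have hI2nn : 0 ≤ ∫ r in Set.Ioc R (2 * R), (|m - r| + a) ^ (-(1 : ℝ) / 2) :=
        setIntegral_nonneg measurableSet_Ioc fun r _ => hfnn r
      have hBle : B ≤ 8 * C ^ 2 * Real.sqrt R := by
        have h1' : m ^ ((1 : ℝ) / 2) ≤ (4 * R) ^ ((1 : ℝ) / 2) :=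
          Real.rpow_le_rpow hm0.le hcase (by norm_num)
        have h2' : (4 * R) ^ ((1 : ℝ) / 2) = 2 * Real.sqrt R := by
          rw [← Real.sqrt_eq_rpow, show (4 : ℝ) * R = 2 ^ 2 * R by norm_num,
            Real.sqrt_mul (by positivity) R, Real.sqrt_sq (by norm_num)]
        rw [h2'] at h1'
        have := mul_le_mul_of_nonneg_left h1' (by positivity : (0 : ℝ) ≤ 4 * C ^ 2)
        rw [hBdef]
        linarith
      have hBI : B * (∫ r in Set.Ioc R (2 * R), (|m - r| + a) ^ (-(1 : ℝ) / 2)) ≤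
          (8 * C ^ 2 * Real.sqrt R) * (4 * Real.sqrt R) :=
        mul_le_mul hBle hI2 hI2nn (by positivity)
      have hsq : Real.sqrt R * Real.sqrt R = R := Real.mul_self_sqrt hRnn
      have hfin : (8 * C ^ 2 * Real.sqrt R) * (4 * Real.sqrt R) = 32 * C ^ 2 * R := by
        have e : (8 * C ^ 2 * Real.sqrt R) * (4 * Real.sqrt R) =
            32 * C ^ 2 * (Real.sqrt R * Real.sqrt R) := by ring
        rw [e, hsq]
      have htot : (∫ r in Set.Ioc R (2 * R), F r) ≤
          (C ^ 2 / D ^ 2 + C ^ 2) * R +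
            B * ∫ r in Set.Ioc R (2 * R), (|m - r| + a) ^ (-(1 : ℝ) / 2) := by
        rw [hsplit] at hstep; exact hstep
      have hBI' : B * (∫ r in Set.Ioc R (2 * R), (|m - r| + a) ^ (-(1 : ℝ) / 2)) ≤
          32 * C ^ 2 * R := by rw [← hfin]; exact hBI
      have e : (C ^ 2 / D ^ 2 + C ^ 2 + 32 * C ^ 2) * R =
          (C ^ 2 / D ^ 2 + C ^ 2) * R + 32 * C ^ 2 * R := by ring
      rw [hKdef, e]
      linarith [htot, hBI']
    · -- everything is in region 1
      have hpt : ∀ r ∈ Set.Ioc R (2 * R), F r ≤ C ^ 2 / D ^ 2 := by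
        intro r hrS
        have hr0 : (0 : ℝ) < r := by have := hrS.1; linarith
        have hrle : r ≤ max (m / 2) 2 :=
          le_trans (show r ≤ m / 2 by have := hrS.2; linarith) (le_max_left _ _)
        exact hreg1 r hr0 hrle
      have hIF : IntegrableOn F (Set.Ioc R (2 * R)) volume := by
        refine Integrable.mono' (hconst_int (C ^ 2 / D ^ 2)) hFmeas.aestronglyMeasurable ?_
        refine (ae_restrict_iff' measurableSet_Ioc).2 (ae_of_all _ fun r hr => ?_)
        rw [Real.norm_of_nonneg (hF0 r)]
        exact hpt r hr
      have hstep : (∫ r in Set.Ioc R (2 * R), F r) ≤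
          ∫ _r in Set.Ioc R (2 * R), (C ^ 2 / D ^ 2 : ℝ) :=
        setIntegral_mono_on hIF (hconst_int _) measurableSet_Ioc hpt
      have hconst : (∫ _r in Set.Ioc R (2 * R), (C ^ 2 / D ^ 2 : ℝ)) = R * (C ^ 2 / D ^ 2) := by
        rw [setIntegral_const, measureReal_def, hvol, smul_eq_mul]
      have e : (C ^ 2 / D ^ 2 + C ^ 2 + 32 * C ^ 2) * R =
          R * (C ^ 2 / D ^ 2) + 33 * C ^ 2 * R := by ring
      rw [hKdef, e]
      linarith [hstep, hconst.le, hconst.ge,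
        mul_nonneg (mul_nonneg (by norm_num : (0:ℝ) ≤ 33) (sq_nonneg C)) hRnn]
  have hFnn : 0 ≤ ∫ r in Set.Ioc R (2 * R), F r :=
    setIntegral_nonneg measurableSet_Ioc fun r _ => hF0 r
  calc (∫ r in Set.Ioc R (2 * R), F r) ^ ((1 : ℝ) / 2)
      ≤ (K * R) ^ ((1 : ℝ) / 2) := Real.rpow_le_rpow hFnn key (by norm_num)
    _ = K ^ ((1 : ℝ) / 2) * R ^ ((1 : ℝ) / 2) := Real.mul_rpow hK0.le hRnn
end
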